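/- Let R be a finite index set and let (L_r)_{r∈R} be mutually independent nonnegative real-valued random variables on a common probability space with 0 ≤ L_r ≤ m_r·n_r almost surely, where n_r are natural numbers, 0 < ε < 1, and m_r are constants with 0 < m_r ≤ ε·d for a constant d > 0. Suppose E[∑_{r∈R} L_r] ≤ d and set Δ_E := ∑_{r∈R} n_r². Then for every real n ≥ 1, P( ∑_{r∈R} L_r ≥ (1 + ε·√(2·(log n)·Δ_E))·d ) ≤ n^{−4}. -/

import Mathlib

open MeasureTheory ProbabilityTheory
open Real

/-- Key analytic inequality for Hoeffding's lemma. -/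
lemma hoeffding_key {p : ℝ} (hp0 : 0 ≤ p) (hp1 : p ≤ 1) (h : ℝ) :
    Real.log (1 - p + p * Real.exp h) ≤ p * h + h ^ 2 / 8 := by
  have hφ : ∀ x : ℝ, 0 < 1 - p + p * Real.exp x := by
    intro x
    rcases lt_or_eq_of_le hp1 with h1 | h1
    · nlinarith [exp_pos x, mul_nonneg hp0 (exp_pos x).le]
    · subst h1; simpa using exp_pos x
  set f : ℝ → ℝ := fun x => Real.log (1 - p + p * Real.exp x) - p * x - x ^ 2 / 8 with hf
  set f' : ℝ → ℝ := fun x => p * Real.exp x / (1 - p + p * Real.exp x) - p - x / 4 with hf'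
  have hder : ∀ x, HasDerivAt f (f' x) x := by
    intro x
    have h1 : HasDerivAt (fun y => 1 - p + p * Real.exp y) (p * Real.exp x) x :=
      ((Real.hasDerivAt_exp x).const_mul p).const_add (1 - p)
    have h2 := h1.log (hφ x).ne'
    have h3 : HasDerivAt (fun y : ℝ => p * y) p x := by simpa using (hasDerivAt_id x).const_mul p
    have h4 : HasDerivAt (fun y : ℝ => y ^ 2 / 8) (x / 4) x := by
      have := (hasDerivAt_pow 2 x).div_const 8
      exact this.congr_deriv (by push_cast; ring)
    exact (h2.sub h3).sub h4
  have hder' : ∀ x, HasDerivAt f'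
      (p * Real.exp x * (1 - p) / (1 - p + p * Real.exp x) ^ 2 - 1 / 4) x := by
    intro x
    have h1 : HasDerivAt (fun y => 1 - p + p * Real.exp y) (p * Real.exp x) x :=
      ((Real.hasDerivAt_exp x).const_mul p).const_add (1 - p)
    have h2 : HasDerivAt (fun y => p * Real.exp y) (p * Real.exp x) x :=
      (Real.hasDerivAt_exp x).const_mul p
    have h3 := h2.div h1 (hφ x).ne'
    have h4 : HasDerivAt (fun y : ℝ => y / 4) (1 / 4) x := (hasDerivAt_id x).div_const 4
    have h5 := (h3.sub_const p).sub h4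
    exact h5.congr_deriv (by ring)
  have hf'' : ∀ x, deriv f' x ≤ 0 := by
    intro x
    rw [(hder' x).deriv]
    have hx := hφ x
    have key : 4 * (p * Real.exp x * (1 - p)) ≤ (1 - p + p * Real.exp x) ^ 2 := by
      nlinarith [sq_nonneg (1 - p - p * Real.exp x)]
    rw [sub_nonpos, div_le_div_iff₀ (by positivity) (by norm_num : (0:ℝ) < 4)]
    nlinarith
  have hf'anti : Antitone f' := antitone_of_deriv_nonpos
    (fun x => (hder' x).differentiableAt) hf''
  have hf'0 : f' 0 = 0 := by simp [f']
  have hf0 : f 0 = 0 := by simp [f]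
  have hfle : f h ≤ 0 := by
    rcases le_total h 0 with hh | hh
    · have hmono : MonotoneOn f (Set.Iic (0:ℝ)) := by
        apply monotoneOn_of_deriv_nonneg (convex_Iic 0)
          (fun x _ => (hder x).differentiableAt.continuousAt.continuousWithinAt)
          (fun x hx => (hder x).differentiableAt.differentiableWithinAt)
        intro x hx
        rw [(hder x).deriv]
        have : x ≤ 0 := le_of_lt (by simpa using hx)
        have := hf'anti this
        rw [hf'0] at this
        exact this
      have := hmono (Set.mem_Iic.2 hh) (Set.mem_Iic.2 le_rfl) hh
      simpa [hf0] using this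
    · have hmono : AntitoneOn f (Set.Ici (0:ℝ)) := by
        apply antitoneOn_of_deriv_nonpos (convex_Ici 0)
          (fun x _ => (hder x).differentiableAt.continuousAt.continuousWithinAt)
          (fun x hx => (hder x).differentiableAt.differentiableWithinAt)
        intro x hx
        rw [(hder x).deriv]
        have : (0:ℝ) ≤ x := le_of_lt (by simpa using hx)
        have := hf'anti this
        rw [hf'0] at this
        exact this
      have := hmono (Set.mem_Ici.2 le_rfl) (Set.mem_Ici.2 hh) hh
      simpa [hf0] using this
  have := hfle
  simp only [f] at this
  linarith


lemma phi_pos {p e : ℝ} (hp0 : 0 ≤ p) (hp1 : p ≤ 1) (he : 0 < e) :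
    0 < 1 - p + p * e := by
  rcases le_or_gt e 1 with h | h
  · nlinarith [mul_nonneg (sub_nonneg.2 hp1) (sub_nonneg.2 h)]
  · nlinarith [mul_nonneg hp0 (by linarith : (0:ℝ) ≤ e - 1)]

/-- Hoeffding's lemma: mgf bound for a centered bounded random variable. -/
lemma hoeffding_mgf_centered {Ω : Type*} [MeasurableSpace Ω] (μ : Measure Ω)
    [IsProbabilityMeasure μ] {X : Ω → ℝ} (hX : Measurable X) {a b : ℝ}
    (hab : ∀ᵐ ω ∂μ, a ≤ X ω ∧ X ω ≤ b) (hmean : ∫ ω, X ω ∂μ = 0) (t : ℝ) :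
    mgf X μ t ≤ Real.exp (t ^ 2 * (b - a) ^ 2 / 8) := by
  have hint : Integrable X μ := by
    refine Integrable.mono' (integrable_const (max |a| |b|)) hX.aestronglyMeasurable ?_
    filter_upwards [hab] with ω ⟨h1, h2⟩
    rw [Real.norm_eq_abs]
    rcases abs_cases (X ω) with ⟨he, _⟩ | ⟨he, _⟩
    · rw [he]; exact le_trans (le_trans h2 (le_abs_self b)) (le_max_right _ _)
    · rw [he]; exact le_trans (le_trans (by linarith [neg_abs_le a] : -X ω ≤ |a|) le_rfl)
        (le_max_left _ _)
  have ha0 : a ≤ 0 := by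
    have h1 : ∫ ω, (a : ℝ) ∂μ ≤ ∫ ω, X ω ∂μ := by
      refine integral_mono_ae (integrable_const a) hint ?_
      filter_upwards [hab] with ω hω using hω.1
    simpa [hmean] using h1
  have hb0 : 0 ≤ b := by
    have h1 : ∫ ω, X ω ∂μ ≤ ∫ ω, (b : ℝ) ∂μ := by
      refine integral_mono_ae hint (integrable_const b) ?_
      filter_upwards [hab] with ω hω using hω.2
    simpa [hmean] using h1
  rcases eq_or_lt_of_le (ha0.trans hb0) with hab' | hab'
  · -- a = b, hence a = b = 0 and X = 0 a.e.
    have ha : a = 0 := le_antisymm ha0 (by linarith)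
    have hb : b = 0 := by linarith
    have hX0 : ∀ᵐ ω ∂μ, X ω = 0 := by
      filter_upwards [hab] with ω ⟨h1, h2⟩; subst ha; subst hb; linarith
    have : mgf X μ t = 1 := by
      rw [mgf]
      rw [integral_congr_ae (g := fun _ => (1 : ℝ)) ?_]
      · simp
      · filter_upwards [hX0] with ω hω; simp [hω]
    rw [this]
    exact Real.one_le_exp (by positivity)
  · -- a < b
    have hba : (0:ℝ) < b - a := by linarith
    set p : ℝ := -a / (b - a) with hp
    have hp0 : 0 ≤ p := div_nonneg (by linarith) hba.le
    have hp1 : p ≤ 1 := by rw [hp, div_le_one hba]; linarith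
    set c1 : ℝ := (b * Real.exp (t * a) - a * Real.exp (t * b)) / (b - a) with hc1
    set c2 : ℝ := (Real.exp (t * b) - Real.exp (t * a)) / (b - a) with hc2
    have hpt : ∀ᵐ ω ∂μ, Real.exp (t * X ω) ≤ c1 + c2 * X ω := by
      filter_upwards [hab] with ω ⟨h1, h2⟩
      set x := X ω
      set lam : ℝ := (b - x) / (b - a) with hlam
      have hl0 : 0 ≤ lam := div_nonneg (by linarith) hba.le
      have hl1 : lam ≤ 1 := by rw [hlam, div_le_one hba]; linarith
      have hconv := convexOn_exp.2 (Set.mem_univ (t * a)) (Set.mem_univ (t * b))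
        hl0 (by linarith : (0:ℝ) ≤ 1 - lam) (by ring)
      have hx : lam • (t * a) + (1 - lam) • (t * b) = t * x := by
        simp only [smul_eq_mul, hlam]
        field_simp
        ring
      rw [hx] at hconv
      have heq : lam • Real.exp (t * a) + (1 - lam) • Real.exp (t * b) = c1 + c2 * x := by
        simp only [smul_eq_mul, hlam, hc1, hc2]
        field_simp
        ring
      linarith [hconv, heq.le]
    have hintexp : Integrable (fun ω => Real.exp (t * X ω)) μ := by
      refine Integrable.mono' (integrable_const (Real.exp (t * a) + Real.exp (t * b)))
        ((hX.const_mul t).exp.aestronglyMeasurable) ?_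
      filter_upwards [hpt, hab] with ω hω ⟨h1, h2⟩
      rw [Real.norm_eq_abs, abs_of_pos (Real.exp_pos _)]
      have h3 : c1 + c2 * X ω ≤ Real.exp (t * a) + Real.exp (t * b) := by
        have hrw : c1 + c2 * X ω = (b * Real.exp (t * a) - a * Real.exp (t * b)
            + (Real.exp (t * b) - Real.exp (t * a)) * X ω) / (b - a) := by
          rw [hc1, hc2]; field_simp
        rw [hrw, div_le_iff₀ hba]
        have e1 : Real.exp (t * b) * X ω ≤ Real.exp (t * b) * b :=
          mul_le_mul_of_nonneg_left h2 (Real.exp_pos _).le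
        have e2 : Real.exp (t * a) * a ≤ Real.exp (t * a) * X ω :=
          mul_le_mul_of_nonneg_left h1 (Real.exp_pos _).le
        nlinarith [e1, e2]
      linarith
    have hintRHS : Integrable (fun ω => c1 + c2 * X ω) μ :=
      (integrable_const c1).add (hint.const_mul c2)
    have h1 : mgf X μ t ≤ c1 := by
      have := integral_mono_ae hintexp hintRHS hpt
      rw [mgf]
      calc ∫ ω, Real.exp (t * X ω) ∂μ ≤ ∫ ω, (c1 + c2 * X ω) ∂μ := this
        _ = c1 + c2 * ∫ ω, X ω ∂μ := by
            rw [integral_add (integrable_const c1) (hint.const_mul c2), integral_const,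
              integral_const_mul]
            simp
        _ = c1 := by rw [hmean]; ring
    refine h1.trans ?_
    -- c1 = exp(t a) * (1 - p + p * exp (t (b-a)))
    have hkey := hoeffding_key hp0 hp1 (t * (b - a))
    have hphi : (0:ℝ) < 1 - p + p * Real.exp (t * (b - a)) :=
      phi_pos hp0 hp1 (Real.exp_pos _)
    have hc1eq : c1 = Real.exp (t * a) * (1 - p + p * Real.exp (t * (b - a))) := by
      rw [hc1, hp]
      have : Real.exp (t * b) = Real.exp (t * a) * Real.exp (t * (b - a)) := by
        rw [← Real.exp_add]; ring_nf
      rw [this]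
      field_simp
      ring
    rw [hc1eq]
    have h2 : 1 - p + p * Real.exp (t * (b - a)) ≤
        Real.exp (p * (t * (b - a)) + (t * (b - a)) ^ 2 / 8) := by
      calc 1 - p + p * Real.exp (t * (b - a))
          = Real.exp (Real.log (1 - p + p * Real.exp (t * (b - a)))) := (Real.exp_log hphi).symm
        _ ≤ _ := Real.exp_le_exp.2 hkey
    calc Real.exp (t * a) * (1 - p + p * Real.exp (t * (b - a)))
        ≤ Real.exp (t * a) * Real.exp (p * (t * (b - a)) + (t * (b - a)) ^ 2 / 8) := by
          exact mul_le_mul_of_nonneg_left h2 (Real.exp_pos _).le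
      _ = Real.exp (t * a + p * (t * (b - a)) + (t * (b - a)) ^ 2 / 8) := by
          rw [← Real.exp_add]; ring_nf
      _ = Real.exp (t ^ 2 * (b - a) ^ 2 / 8) := by
          congr 1
          rw [hp]
          field_simp
          ring

/-- Hoeffding's lemma, uncentered form for `0 ≤ X ≤ c`. -/
lemma hoeffding_mgf {Ω : Type*} [MeasurableSpace Ω] (μ : Measure Ω)
    [IsProbabilityMeasure μ] {X : Ω → ℝ} (hX : Measurable X) {c : ℝ}
    (hbd : ∀ᵐ ω ∂μ, 0 ≤ X ω ∧ X ω ≤ c) (t : ℝ) :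
    mgf X μ t ≤ Real.exp (t * (∫ ω, X ω ∂μ) + t ^ 2 * c ^ 2 / 8) := by
  have hc0 : 0 ≤ c := by
    have hne : (MeasureTheory.ae μ).NeBot := IsProbabilityMeasure.ae_neBot
    obtain ⟨ω, h1, h2⟩ := hbd.exists
    linarith
  set m0 : ℝ := ∫ ω, X ω ∂μ with hm0
  have hint : Integrable X μ := by
    refine Integrable.mono' (integrable_const c) hX.aestronglyMeasurable ?_
    filter_upwards [hbd] with ω ⟨h1, h2⟩
    rw [Real.norm_eq_abs, abs_of_nonneg h1]; exact h2
  set Y : Ω → ℝ := fun ω => X ω - m0 with hY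
  have hYmeas : Measurable Y := hX.sub measurable_const
  have hYbd : ∀ᵐ ω ∂μ, -m0 ≤ Y ω ∧ Y ω ≤ c - m0 := by
    filter_upwards [hbd] with ω ⟨h1, h2⟩
    constructor <;> simp [hY] <;> linarith
  have hYmean : ∫ ω, Y ω ∂μ = 0 := by
    rw [hY]
    simp only
    rw [integral_sub hint (integrable_const m0), integral_const]
    simp [hm0]
  have hB := hoeffding_mgf_centered μ hYmeas hYbd hYmean t
  have hmgf : mgf X μ t = Real.exp (t * m0) * mgf Y μ t := by
    rw [mgf, mgf, ← integral_const_mul]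
    congr 1
    ext ω
    rw [← Real.exp_add, hY]
    ring_nf
  rw [hmgf]
  calc Real.exp (t * m0) * mgf Y μ t
      ≤ Real.exp (t * m0) * Real.exp (t ^ 2 * (c - m0 - -m0) ^ 2 / 8) :=
        mul_le_mul_of_nonneg_left hB (Real.exp_pos _).le
    _ = Real.exp (t * m0 + t ^ 2 * c ^ 2 / 8) := by rw [← Real.exp_add]; ring_nf


/-- Sharpened edge capacity violation bound under the stronger demand assumption
`m r ≤ ε * d` with `0 < ε < 1`: the probability of exceeding
`(1 + ε √(2 (log n) Δ_E)) d` is at most `n⁻⁴`. -/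
theorem edge_capacity_violation_eps {Ω : Type*} [MeasurableSpace Ω] (μ : Measure Ω)
    [IsProbabilityMeasure μ]
    {R : Type*} [Fintype R] (L : R → Ω → ℝ) (m : R → ℝ) (nE : R → ℕ) (d ε : ℝ)
    (hmeas : ∀ r, Measurable (L r))
    (hindep : iIndepFun L μ)
    (hbdd : ∀ r, ∀ᵐ ω ∂μ, 0 ≤ L r ω ∧ L r ω ≤ m r * (nE r : ℝ))
    (hd : 0 < d)
    (hε0 : 0 < ε) (hε1 : ε < 1)
    (hm : ∀ r, 0 < m r ∧ m r ≤ ε * d)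
    (hE : ∫ ω, ∑ r, L r ω ∂μ ≤ d) :
    ∀ n : ℝ, 1 ≤ n →
      μ {ω | (1 + ε * Real.sqrt (2 * Real.log n * ∑ r, ((nE r : ℝ)) ^ 2)) * d ≤ ∑ r, L r ω}
        ≤ ENNReal.ofReal (n ^ (-4 : ℝ)) := by
  intro n hn
  have hn0 : (0:ℝ) < n := lt_of_lt_of_le one_pos hn
  have hlogn : 0 ≤ Real.log n := Real.log_nonneg hn
  set Δ : ℝ := ∑ r, ((nE r : ℝ)) ^ 2 with hΔdef
  have hΔ0 : 0 ≤ Δ := Finset.sum_nonneg fun r _ => sq_nonneg _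
  have hintL : ∀ r, Integrable (L r) μ := by
    intro r
    refine Integrable.mono' (integrable_const (m r * (nE r : ℝ)))
      (hmeas r).aestronglyMeasurable ?_
    filter_upwards [hbdd r] with ω ⟨h1, h2⟩
    rw [Real.norm_eq_abs, abs_of_nonneg h1]; exact h2
  rcases eq_or_lt_of_le hΔ0 with hΔz | hΔpos
  · -- degenerate case: all nE r = 0, so the sum is 0 a.e. and the event is null
    have hnE : ∀ r, (nE r : ℝ) = 0 := by
      intro r
      have h := (Finset.sum_eq_zero_iff_of_nonneg
        (fun r _ => sq_nonneg ((nE r : ℝ)))).1 hΔz.symm r (Finset.mem_univ r)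
      exact pow_eq_zero_iff two_ne_zero |>.1 h
    have hae : ∀ᵐ ω ∂μ, ∑ r, L r ω < (1 + ε * Real.sqrt (2 * Real.log n * Δ)) * d := by
      have hall : ∀ᵐ ω ∂μ, ∀ r, 0 ≤ L r ω ∧ L r ω ≤ m r * (nE r : ℝ) := ae_all_iff.2 hbdd
      filter_upwards [hall] with ω hω
      have hz : ∑ r, L r ω = 0 := by
        refine Finset.sum_eq_zero fun r _ => le_antisymm ?_ (hω r).1
        have h2 := (hω r).2
        rw [hnE r, mul_zero] at h2
        exact h2
      rw [hz, ← hΔz]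
      have : Real.sqrt (2 * Real.log n * 0) = 0 := by simp
      rw [this, mul_zero, add_zero, one_mul]
      exact hd
    have hzero : μ {ω | (1 + ε * Real.sqrt (2 * Real.log n * Δ)) * d ≤ ∑ r, L r ω} = 0 := by
      have h := ae_iff.1 hae
      convert h using 2
      ext ω
      simp [not_lt]
    rw [hzero]
    exact zero_le
  · set c : R → ℝ := fun r => m r * (nE r : ℝ) with hc
    set C : ℝ := ∑ r, (c r) ^ 2 with hC
    have hCpos : 0 < C := by
      obtain ⟨r, hr⟩ : ∃ r, (0:ℝ) < ((nE r : ℝ)) ^ 2 := by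
        by_contra hcon
        push_neg at hcon
        have : Δ ≤ 0 := Finset.sum_nonpos fun r _ => hcon r
        linarith
      refine Finset.sum_pos' (fun i _ => sq_nonneg _) ⟨r, Finset.mem_univ r, ?_⟩
      have he : (c r) ^ 2 = (m r) ^ 2 * ((nE r : ℝ)) ^ 2 := by rw [hc]; ring
      rw [he]
      exact mul_pos (pow_pos (hm r).1 2) hr
    have hCle : C ≤ ε ^ 2 * d ^ 2 * Δ := by
      rw [hC, hΔdef, Finset.mul_sum]
      refine Finset.sum_le_sum fun r _ => ?_
      have h1 := (hm r).1
      have h2 := (hm r).2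
      have he : (c r) ^ 2 = (m r) ^ 2 * ((nE r : ℝ)) ^ 2 := by rw [hc]; ring
      rw [he]
      have hms : (m r) ^ 2 ≤ ε ^ 2 * d ^ 2 := by nlinarith
      nlinarith [sq_nonneg ((nE r : ℝ))]
    set t0 : ℝ := ε * d * Real.sqrt (2 * Real.log n * Δ) with ht0
    have ht00 : 0 ≤ t0 := by positivity
    set s : ℝ := 4 * t0 / C with hs
    have hs0 : 0 ≤ s := by positivity
    set ES : ℝ := ∫ ω, ∑ r, L r ω ∂μ with hES
    have hintexp : ∀ r ∈ Finset.univ, Integrable (fun ω => Real.exp (s * L r ω)) μ := by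
      intro r _
      refine Integrable.mono' (integrable_const (Real.exp (s * c r)))
        ((hmeas r).const_mul s).exp.aestronglyMeasurable ?_
      filter_upwards [hbdd r] with ω ⟨h1, h2⟩
      rw [Real.norm_eq_abs, abs_of_pos (Real.exp_pos _), Real.exp_le_exp]
      exact mul_le_mul_of_nonneg_left h2 hs0
    have hintS : Integrable (fun ω => Real.exp (s * (∑ r, L r) ω)) μ :=
      hindep.integrable_exp_mul_sum hmeas hintexp
    have hcher := measure_ge_le_exp_mul_mgf (μ := μ) (X := ∑ r, L r) (ES + t0) hs0 hintS
    have hsum : ∑ r, ∫ ω, L r ω ∂μ = ES := by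
      rw [hES, integral_finset_sum _ fun r _ => hintL r]
    have hmgf : mgf (∑ r, L r) μ s ≤ Real.exp (s * ES + s ^ 2 * C / 8) := by
      rw [hindep.mgf_sum hmeas Finset.univ]
      calc ∏ r, mgf (L r) μ s
          ≤ ∏ r, Real.exp (s * (∫ ω, L r ω ∂μ) + s ^ 2 * (c r) ^ 2 / 8) :=
            Finset.prod_le_prod (fun r _ => mgf_nonneg)
              (fun r _ => hoeffding_mgf μ (hmeas r) (hbdd r) s)
        _ = Real.exp (∑ r, (s * (∫ ω, L r ω ∂μ) + s ^ 2 * (c r) ^ 2 / 8)) :=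
            (Real.exp_sum _ _).symm
        _ = Real.exp (s * ES + s ^ 2 * C / 8) := by
            congr 1
            rw [Finset.sum_add_distrib, ← Finset.mul_sum, hsum, ← Finset.sum_div,
              ← Finset.mul_sum, ← hC]
    have hreal : (μ {ω | ES + t0 ≤ (∑ r, L r) ω}).toReal ≤ Real.exp (-(2 * t0 ^ 2 / C)) := by
      calc (μ {ω | ES + t0 ≤ (∑ r, L r) ω}).toReal
          ≤ Real.exp (-s * (ES + t0)) * mgf (∑ r, L r) μ s := hcher
        _ ≤ Real.exp (-s * (ES + t0)) * Real.exp (s * ES + s ^ 2 * C / 8) :=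
            mul_le_mul_of_nonneg_left hmgf (Real.exp_pos _).le
        _ = Real.exp (-s * (ES + t0) + (s * ES + s ^ 2 * C / 8)) := (Real.exp_add _ _).symm
        _ = Real.exp (-(2 * t0 ^ 2 / C)) := by
            congr 1
            rw [hs]
            field_simp
            ring
    have ht0sq : t0 ^ 2 = ε ^ 2 * d ^ 2 * (2 * Real.log n * Δ) := by
      rw [ht0, mul_pow, mul_pow, Real.sq_sqrt (by positivity)]
    have hexp : Real.exp (-(2 * t0 ^ 2 / C)) ≤ n ^ (-4 : ℝ) := by
      rw [Real.rpow_def_of_pos hn0]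
      apply Real.exp_le_exp.2
      have h1 : 4 * Real.log n ≤ 2 * t0 ^ 2 / C := by
        rw [le_div_iff₀ hCpos, ht0sq]
        nlinarith [mul_le_mul_of_nonneg_left hCle hlogn]
      have : Real.log n * (-4) = -(4 * Real.log n) := by ring
      rw [this]
      linarith
    have hsub : {ω | (1 + ε * Real.sqrt (2 * Real.log n * Δ)) * d ≤ ∑ r, L r ω} ⊆
        {ω | ES + t0 ≤ (∑ r, L r) ω} := by
      intro ω hω
      simp only [Set.mem_setOf_eq, Finset.sum_apply] at hω ⊢
      have hles : ES ≤ d := hE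
      have heq : (1 + ε * Real.sqrt (2 * Real.log n * Δ)) * d = d + t0 := by
        rw [ht0]; ring
      rw [heq] at hω
      linarith
    calc μ {ω | (1 + ε * Real.sqrt (2 * Real.log n * Δ)) * d ≤ ∑ r, L r ω}
        ≤ μ {ω | ES + t0 ≤ (∑ r, L r) ω} := measure_mono hsub
      _ ≤ ENNReal.ofReal (n ^ (-4 : ℝ)) := by
          rw [← ENNReal.ofReal_toReal (measure_ne_top μ _)]
          exact ENNReal.ofReal_le_ofReal (hreal.trans hexp)
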